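/- Let $s_0, \ldots, s_{2n}, s_{2n+2}$ be reals such that $H_n = [s_{i+j}]_{i,j=0}^n$ is positive definite and $s_{2n+2} - w_n^T H_{n-1}^{-1} w_n > 0$, where $w_n^T = (s_{n+1},\ldots,s_{2n})$. Then there exists $s_{2n+1} \in \mathbb{R}$ such that the completed Hankel matrix $H_{n+1} = [s_{i+j}]_{i,j=0}^{n+1}$ is positive definite. In particular, $s_{2n+1} = v_{n-1}^T H_{n-1}^{-1} w_n$ works, where $v_{n-1}^T = (s_n, \ldots, s_{2n-1})$. -/

import Mathlib

open Matrix

set_option linter.unusedSectionVars false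

variable {m p : Type*} [Fintype m] [DecidableEq m] [Fintype p] [DecidableEq p]

lemma myPosDef_conj {M N : Matrix m m ℝ} (hM : M.PosDef) (hN : IsUnit N) :
    (Nᴴ * M * N).PosDef := by
  refine Matrix.PosDef.of_dotProduct_mulVec_pos (isHermitian_conjTranspose_mul_mul N hM.1) (fun x hx => ?_)
  have hx' : N *ᵥ x ≠ 0 :=
    (Matrix.mulVec_injective_iff_isUnit.mpr hN |>.ne_iff' (by simp)).2 hx
  simpa only [star_mulVec, dotProduct_mulVec, vecMul_vecMul] using hM.dotProduct_mulVec_pos hx'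

lemma myPosDef_blockDiag {A : Matrix m m ℝ} {S : Matrix p p ℝ}
    (hA : A.PosDef) (hS : S.PosDef) : (fromBlocks A 0 0 S).PosDef := by
  refine Matrix.PosDef.of_dotProduct_mulVec_pos ?_ ?_
  · rw [IsHermitian, fromBlocks_conjTranspose, hA.1.eq, hS.1.eq]; simp
  · intro z hz
    have hzd : z = Sum.elim (z ∘ Sum.inl) (z ∘ Sum.inr) := by
      funext i; cases i <;> rfl
    rw [hzd, fromBlocks_mulVec]
    simp only [zero_mulVec, add_zero, zero_add, star_trivial, Sum.elim_comp_inl,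
      Sum.elim_comp_inr]
    rw [sumElim_dotProduct_sumElim]
    rcases (by
      by_contra h
      push_neg at h
      apply hz
      funext i
      cases i with
      | inl i => exact congrFun h.1 i
      | inr i => exact congrFun h.2 i : z ∘ Sum.inl ≠ 0 ∨ z ∘ Sum.inr ≠ 0) with h | h
    · have := hA.dotProduct_mulVec_pos h
      have h2 := hS.posSemidef.dotProduct_mulVec_nonneg (z ∘ Sum.inr)
      simp only [star_trivial] at this h2
      linarith
    · have := hS.dotProduct_mulVec_pos h
      have h2 := hA.posSemidef.dotProduct_mulVec_nonneg (z ∘ Sum.inl)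
      simp only [star_trivial] at this h2
      linarith

lemma myFactor {A : Matrix m m ℝ} (B : Matrix m p ℝ) (D : Matrix p p ℝ)
    (hA : A.IsHermitian) (hu : IsUnit A) :
    fromBlocks A B Bᴴ D =
      (fromBlocks 1 (A⁻¹ * B) 0 1)ᴴ * fromBlocks A 0 0 (D - Bᴴ * A⁻¹ * B) *
        fromBlocks 1 (A⁻¹ * B) 0 1 := by
  have hdet : IsUnit A.det := (isUnit_iff_isUnit_det A).mp hu
  have hT : A⁻¹ᵀ = A⁻¹ := by
    rw [← conjTranspose_eq_transpose_of_trivial, hA.inv.eq]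
  have h1 : A * (A⁻¹ * B) = B := by
    rw [← Matrix.mul_assoc, Matrix.mul_nonsing_inv _ hdet, Matrix.one_mul]
  have h2 : A⁻¹ * A = 1 := Matrix.nonsing_inv_mul _ hdet
  rw [fromBlocks_conjTranspose, fromBlocks_multiply, fromBlocks_multiply]
  simp only [conjTranspose_one, conjTranspose_zero, conjTranspose_mul,
    ← conjTranspose_eq_transpose_of_trivial]
  rw [hA.inv.eq]
  simp only [Matrix.mul_zero, Matrix.zero_mul, Matrix.mul_one, Matrix.one_mul,
    add_zero, zero_add, h1]
  rw [Matrix.mul_assoc Bᴴ A⁻¹ A, h2, Matrix.mul_one, ← Matrix.mul_assoc Bᴴ A⁻¹ B]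
  simp [add_sub_cancel]

lemma myPosDef_fromBlocks_iff {A : Matrix m m ℝ} (B : Matrix m p ℝ) (D : Matrix p p ℝ)
    (hA : A.PosDef) :
    (fromBlocks A B Bᴴ D).PosDef ↔ (D - Bᴴ * A⁻¹ * B).PosDef := by
  have hu : IsUnit A := hA.isUnit
  have hL : IsUnit (fromBlocks (1 : Matrix m m ℝ) (A⁻¹ * B) (0 : Matrix p m ℝ) (1 : Matrix p p ℝ)) := by
    rw [Matrix.isUnit_iff_isUnit_det, det_fromBlocks_zero₂₁]
    simp
  rw [myFactor B D hA.1 hu]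
  constructor
  · intro h
    have hLi : IsUnit (fromBlocks (1 : Matrix m m ℝ) (A⁻¹ * B) (0 : Matrix p m ℝ) (1 : Matrix p p ℝ))⁻¹ :=
      Matrix.isUnit_nonsing_inv_iff.mpr hL
    have h2 := myPosDef_conj h hLi
    set L := fromBlocks (1 : Matrix m m ℝ) (A⁻¹ * B) (0 : Matrix p m ℝ) (1 : Matrix p p ℝ) with hLdef
    have e1 : L * L⁻¹ = 1 := Matrix.mul_nonsing_inv _ ((isUnit_iff_isUnit_det _).mp hL)
    have e2 : L⁻¹ᴴ * Lᴴ = 1 := by rw [← conjTranspose_mul, e1, conjTranspose_one]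
    have key : L⁻¹ᴴ * (Lᴴ * fromBlocks A 0 0 (D - Bᴴ * A⁻¹ * B) * L) * L⁻¹
        = fromBlocks A 0 0 (D - Bᴴ * A⁻¹ * B) := by
      rw [Matrix.mul_assoc Lᴴ (fromBlocks A 0 0 (D - Bᴴ * A⁻¹ * B)) L,
        ← Matrix.mul_assoc L⁻¹ᴴ Lᴴ _, e2, Matrix.one_mul,
        Matrix.mul_assoc, e1, Matrix.mul_one]
    rw [key] at h2
    -- extract bottom-right positivity
    refine Matrix.PosDef.of_dotProduct_mulVec_pos ?_ ?_
    · have hherm := h2.1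
      have := congrArg Matrix.toBlocks₂₂ hherm.eq
      simpa [fromBlocks_conjTranspose, fromBlocks_transpose, toBlocks_fromBlocks₂₂, Matrix.IsSymm] using this
    · intro y hy
      have hz : (Sum.elim (0 : m → ℝ) y) ≠ 0 := by
        intro hc
        apply hy
        funext i
        exact congrFun hc (Sum.inr i)
      have := h2.dotProduct_mulVec_pos hz
      simpa [fromBlocks_mulVec, sumElim_dotProduct_sumElim] using this
  · intro hS
    exact myPosDef_conj (myPosDef_blockDiag hA hS) hL

lemma myPosDef_toBlock₁₁ {A : Matrix m m ℝ} {B : Matrix m p ℝ} {C : Matrix p m ℝ}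
    {D : Matrix p p ℝ} (h : (fromBlocks A B C D).PosDef) : A.PosDef := by
  refine Matrix.PosDef.of_dotProduct_mulVec_pos ?_ ?_
  · have := congrArg Matrix.toBlocks₁₁ h.1.eq
    simpa [fromBlocks_conjTranspose, fromBlocks_transpose, toBlocks_fromBlocks₁₁, Matrix.IsSymm] using this
  · intro x hx
    have hz : (Sum.elim x (0 : p → ℝ)) ≠ 0 := by
      intro hc
      apply hx
      funext i
      exact congrFun hc (Sum.inl i)
    have := h.dotProduct_mulVec_pos hz
    simpa [fromBlocks_mulVec, sumElim_dotProduct_sumElim] using this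

lemma myPosDef_of_submatrix_equiv {l : Type*} [Fintype l] {M : Matrix l l ℝ}
    (e : m ≃ l) (h : (M.submatrix e e).PosDef) : M.PosDef := by
  refine Matrix.PosDef.of_dotProduct_mulVec_pos ?_ ?_
  · have h1 := h.1.eq
    rw [conjTranspose_submatrix] at h1
    funext i j
    have := congrFun (congrFun h1 (e.symm i)) (e.symm j)
    simpa using this
  · intro x hx
    have hx' : x ∘ e ≠ 0 := by
      intro hc
      apply hx
      funext i
      have := congrFun hc (e.symm i)
      simpa using this
    have := h.dotProduct_mulVec_pos hx'
    rw [submatrix_mulVec_equiv] at this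
    have hcomp : (x ∘ e) ∘ e.symm = x := by funext i; simp
    rw [hcomp] at this
    simpa [star_trivial, dotProduct, Equiv.sum_comp e (fun j => x j * (M *ᵥ x) j)]
      using this

lemma myEntry {k : ℕ} (A : Matrix m m ℝ) (B : Matrix m (Fin k) ℝ) (i j : Fin k) :
    (Bᴴ * A * B) i j = (fun l => B l i) ⬝ᵥ A *ᵥ (fun l => B l j) := by
  simp only [Matrix.mul_apply, dotProduct, mulVec, dotProduct, conjTranspose_apply,
    star_trivial, Finset.sum_mul, Finset.mul_sum, mul_assoc]
  exact Finset.sum_comm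
lemma myPosDef_submatrix_equiv {l : Type*} [Fintype l] [DecidableEq l] {M : Matrix l l ℝ}
    (e : m ≃ l) (h : M.PosDef) : (M.submatrix e e).PosDef := by
  apply myPosDef_of_submatrix_equiv e.symm
  simpa [Matrix.submatrix_submatrix, Equiv.self_comp_symm, Matrix.submatrix_id_id] using h

/-- Hankel matrix of a sequence. -/
def hankelMatrix (s : ℕ → ℝ) (n : ℕ) : Matrix (Fin (n + 1)) (Fin (n + 1)) ℝ :=
  Matrix.of fun i j => s ((i : ℕ) + (j : ℕ))

theorem stmt_6 (n : ℕ) (hn : 1 ≤ n) (s : ℕ → ℝ)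
    (w v : Fin n → ℝ) (hw : ∀ i, w i = s (n + 1 + (i : ℕ))) (hv : ∀ i, v i = s (n + (i : ℕ)))
    (hpd : (hankelMatrix s n).PosDef)
    (hschur : 0 < s (2 * n + 2)
        - w ⬝ᵥ (Matrix.of fun i j : Fin n => s ((i : ℕ) + (j : ℕ)))⁻¹ *ᵥ w) :
    (∃ x : ℝ, (Matrix.of fun i j : Fin (n + 2) =>
        if (i : ℕ) + (j : ℕ) = 2 * n + 1 then x else s ((i : ℕ) + (j : ℕ))).PosDef) ∧
    (Matrix.of fun i j : Fin (n + 2) =>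
        if (i : ℕ) + (j : ℕ) = 2 * n + 1 then
          v ⬝ᵥ (Matrix.of fun i j : Fin n => s ((i : ℕ) + (j : ℕ)))⁻¹ *ᵥ w
        else s ((i : ℕ) + (j : ℕ))).PosDef := by
  set A : Matrix (Fin n) (Fin n) ℝ :=
    Matrix.of fun i j : Fin n => s ((i : ℕ) + (j : ℕ)) with hAdef
  set B1 : Matrix (Fin n) (Fin 1) ℝ := Matrix.of fun i _ => v i with hB1def
  set D1 : Matrix (Fin 1) (Fin 1) ℝ := Matrix.of fun _ _ => s (2 * n) with hD1def
  have hsub1 : (hankelMatrix s n).submatrix finSumFinEquiv finSumFinEquiv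
      = fromBlocks A B1 B1ᴴ D1 := by
    ext i j
    cases i with
    | inl i =>
      cases j with
      | inl j => simp [hankelMatrix, hAdef]
      | inr j =>
        simp [hankelMatrix, hB1def, hv]
        try (congr 1; omega)
    | inr i =>
      cases j with
      | inl j =>
        simp [hankelMatrix, hB1def, hv]
        try (congr 1; omega)
      | inr j =>
        simp [hankelMatrix, hD1def]
        try (congr 1; omega)
  have hFB1 : (fromBlocks A B1 B1ᴴ D1).PosDef :=
    hsub1 ▸ myPosDef_submatrix_equiv _ hpd
  have hA : A.PosDef := myPosDef_toBlock₁₁ hFB1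
  have hS1 : (D1 - B1ᴴ * A⁻¹ * B1).PosDef := (myPosDef_fromBlocks_iff B1 D1 hA).mp hFB1
  have hα : 0 < s (2 * n) - v ⬝ᵥ A⁻¹ *ᵥ v := by
    have h1 := hS1.dotProduct_mulVec_pos (x := fun _ => 1) (by intro h; exact one_ne_zero (congrFun h 0))
    have h2 : (B1ᴴ * A⁻¹ * B1) 0 0 = v ⬝ᵥ A⁻¹ *ᵥ v := by
      rw [myEntry]
      rw [hB1def]
      rfl
    have h3 : (star fun _ : Fin 1 => (1:ℝ)) ⬝ᵥ ((D1 - B1ᴴ * A⁻¹ * B1) *ᵥ fun _ => 1)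
        = s (2 * n) - v ⬝ᵥ A⁻¹ *ᵥ v := by
      have e0 : ∀ (M : Matrix (Fin 1) (Fin 1) ℝ),
          ((star fun _ : Fin 1 => (1:ℝ)) ⬝ᵥ M *ᵥ fun _ => 1) = M 0 0 := by
        intro M; simp [dotProduct, mulVec, Fin.sum_univ_one]
      rw [e0, Matrix.sub_apply, h2, hD1def]
      rfl
    rw [h3] at h1
    exact h1
  have hT : A⁻¹ᵀ = A⁻¹ := by
    rw [← conjTranspose_eq_transpose_of_trivial, hA.1.inv.eq]
  have hsymm : w ⬝ᵥ A⁻¹ *ᵥ v = v ⬝ᵥ A⁻¹ *ᵥ w := by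
    rw [dotProduct_mulVec, ← mulVec_transpose, hT, dotProduct_comm]
  set x0 : ℝ := v ⬝ᵥ A⁻¹ *ᵥ w with hx0def
  set B2 : Matrix (Fin n) (Fin 2) ℝ := Matrix.of fun i j => ![v i, w i] j with hB2def
  set D2 : Matrix (Fin 2) (Fin 2) ℝ := !![s (2 * n), x0; x0, s (2 * n + 2)] with hD2def
  have hS2 : D2 - B2ᴴ * A⁻¹ * B2
      = Matrix.diagonal ![s (2 * n) - v ⬝ᵥ A⁻¹ *ᵥ v, s (2 * n + 2) - w ⬝ᵥ A⁻¹ *ᵥ w] := by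
    ext i j
    rw [Matrix.sub_apply, myEntry]
    fin_cases i <;> fin_cases j <;>
      simp [hD2def, hB2def, Matrix.diagonal, hx0def, hsymm]
  have hdiag : (D2 - B2ᴴ * A⁻¹ * B2).PosDef := by
    rw [hS2]
    apply Matrix.PosDef.diagonal
    intro i
    fin_cases i
    · simpa using hα
    · simpa using hschur
  have hFB2 : (fromBlocks A B2 B2ᴴ D2).PosDef :=
    (myPosDef_fromBlocks_iff B2 D2 hA).mpr hdiag
  have hsub2 : (Matrix.of fun i j : Fin (n + 2) =>
        if (i : ℕ) + (j : ℕ) = 2 * n + 1 then x0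
        else s ((i : ℕ) + (j : ℕ))).submatrix finSumFinEquiv finSumFinEquiv
      = fromBlocks A B2 B2ᴴ D2 := by
    ext i j
    cases i with
    | inl i =>
      cases j with
      | inl j =>
        simp [hAdef]
        try first
        | exact fun h => absurd h (by omega)
        | exact fun h => absurd (by omega) h
        | rw [if_pos (by omega)]
        | (rw [if_neg (by omega)]; congr 1; omega)
      | inr j =>
        fin_cases j <;>
          simp [hB2def, hv, hw] <;>
          try first
          | exact fun h => absurd h (by omega)
          | exact fun h => absurd (by omega) h
          | rw [if_pos (by omega)]
          | (rw [if_neg (by omega)]; congr 1; omega)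
    | inr i =>
      cases j with
      | inl j =>
        fin_cases i <;>
          simp [hB2def, hv, hw] <;>
          try first
          | exact fun h => absurd h (by omega)
          | exact fun h => absurd (by omega) h
          | rw [if_pos (by omega)]
          | (rw [if_neg (by omega)]; congr 1; omega)
      | inr j =>
        fin_cases i <;> fin_cases j <;>
          simp [hD2def] <;>
          try first
          | exact fun h => absurd h (by omega)
          | exact fun h => absurd (by omega) h
          | rw [if_pos (by omega)]
          | (rw [if_neg (by omega)]; congr 1; omega)
  have key : (Matrix.of fun i j : Fin (n + 2) =>
      if (i : ℕ) + (j : ℕ) = 2 * n + 1 then x0 else s ((i : ℕ) + (j : ℕ))).PosDef :=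
    myPosDef_of_submatrix_equiv finSumFinEquiv (hsub2 ▸ hFB2)
  exact ⟨⟨x0, key⟩, key⟩
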